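/- If 0 ≤ A ≤ B and m·I ≤ B ≤ M·I with 0 < m ≤ M, then A² ≤ ((M+m)²/(4Mm))·B². -/

import Mathlib

open Matrix
open scoped ComplexOrder
open scoped MatrixOrder

private lemma psd_smul {n : ℕ} {X : Matrix (Fin n) (Fin n) ℂ} {r : ℝ}
    (hr : 0 ≤ r) (hX : X.PosSemidef) : (r • X).PosSemidef := by
  rw [posSemidef_iff_dotProduct_mulVec]
  constructor
  · show (r • X)ᴴ = r • X
    rw [conjTranspose_smul, star_trivial, hX.1.eq]
  · intro x
    rw [smul_mulVec, dotProduct_smul, RCLike.real_smul_eq_coe_mul]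
    exact mul_nonneg (RCLike.ofReal_nonneg.mpr hr) (hX.dotProduct_mulVec_nonneg x)

theorem sq_le_kantorovich_sq
    {n : ℕ} (A B : Matrix (Fin n) (Fin n) ℂ) (m M : ℝ) (hm : 0 < m) (hmM : m ≤ M)
    (hA : A.PosSemidef) (hAB : (B - A).PosSemidef)
    (hBm : (B - m • (1 : Matrix (Fin n) (Fin n) ℂ)).PosSemidef)
    (hBM : ((M • (1 : Matrix (Fin n) (Fin n) ℂ)) - B).PosSemidef) :
    ((((M + m) ^ 2 / (4 * M * m)) • B ^ 2) - A ^ 2).PosSemidef := by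
  have hM0 : (0:ℝ) < M := lt_of_lt_of_le hm hmM
  -- B is positive definite
  have h1pd : ((m : ℝ) • (1 : Matrix (Fin n) (Fin n) ℂ)).PosDef := by
    rw [posDef_iff_dotProduct_mulVec]
    constructor
    · show ((m:ℝ) • (1:Matrix (Fin n) (Fin n) ℂ))ᴴ = _
      rw [conjTranspose_smul, star_trivial, conjTranspose_one]
    · intro x hx
      rw [smul_mulVec, dotProduct_smul, RCLike.real_smul_eq_coe_mul, one_mulVec]
      exact mul_pos (RCLike.ofReal_pos.mpr hm) (dotProduct_star_self_pos_iff.mpr hx)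
  have hBpd : B.PosDef := by
    have h := h1pd.add_posSemidef hBm
    rwa [add_sub_cancel] at h
  have hB : B.PosSemidef := hBpd.posSemidef
  set R : Matrix (Fin n) (Fin n) ℂ := CFC.sqrt B with hRdef
  have hRpsd : R.PosSemidef := (CFC.sqrt_nonneg B).posSemidef
  have hRh : Rᴴ = R := hRpsd.1
  have hRR : R * R = B := CFC.sqrt_mul_sqrt_self B hB.nonneg
  have hRdet : IsUnit R.det := by
    have hBdet : IsUnit B.det := (Matrix.isUnit_iff_isUnit_det B).mp hBpd.isUnit
    rw [← hRR, det_mul] at hBdet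
    exact isUnit_of_mul_isUnit_left hBdet
  set G : Matrix (Fin n) (Fin n) ℂ := R⁻¹ with hGdef
  have hGR : G * R = 1 := nonsing_inv_mul R hRdet
  have hRG : R * G = 1 := mul_nonsing_inv R hRdet
  have hGh : Gᴴ = G := by rw [hGdef, conjTranspose_nonsing_inv, hRh]
  have cancel1 : ∀ X : Matrix (Fin n) (Fin n) ℂ, G * (R * X) = X := fun X => by
    rw [hGdef]; exact nonsing_inv_mul_cancel_left R X hRdet
  have cancel2 : ∀ X : Matrix (Fin n) (Fin n) ℂ, R * (G * X) = X := fun X => by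
    rw [hGdef]; exact mul_nonsing_inv_cancel_left R X hRdet
  set C : Matrix (Fin n) (Fin n) ℂ := G * A * G with hCdef
  have hC : C.PosSemidef := by
    have h := hA.mul_mul_conjTranspose_same G
    rwa [hGh] at h
  have hCh : Cᴴ = C := hC.1
  have hGBG : G * B * G = 1 := by
    rw [← hRR, Matrix.mul_assoc, Matrix.mul_assoc, cancel1, hGdef,
      mul_nonsing_inv R hRdet]
  have hOneC : ((1 : Matrix (Fin n) (Fin n) ℂ) - C).PosSemidef := by
    have h := hAB.mul_mul_conjTranspose_same G
    rw [hGh] at h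
    have e : G * (B - A) * G = 1 - C := by
      rw [Matrix.mul_sub, Matrix.sub_mul, hGBG, hCdef]
    rwa [e] at h
  -- D = (B - m•1) * (M•1 - B) is PSD
  set P : Matrix (Fin n) (Fin n) ℂ := B - m • 1 with hPdef
  set D : Matrix (Fin n) (Fin n) ℂ := P * (M • 1 - B) with hDdef
  have hD : D.PosSemidef := by
    set S : Matrix (Fin n) (Fin n) ℂ := CFC.sqrt P with hSdef
    have hSh : Sᴴ = S := (CFC.sqrt_nonneg P).posSemidef.1
    have hSS : S * S = P := CFC.sqrt_mul_sqrt_self P hBm.nonneg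
    have h := hBM.mul_mul_conjTranspose_same S
    rw [hSh] at h
    have e : S * (M • 1 - B) * S = D := by
      have hB' : B = P + m • 1 := by rw [hPdef]; abel
      rw [hDdef, hB', ← hSS]
      simp only [Matrix.mul_sub, Matrix.sub_mul, Matrix.mul_add, Matrix.add_mul,
        mul_smul_comm, smul_mul_assoc, Matrix.mul_one, Matrix.one_mul, Matrix.mul_assoc]
    rwa [e] at h
  -- the three PSD pieces, with t = (M+m)/(2Mm)
  set t : ℝ := (M + m) / (2 * M * m) with htdef
  have hT1 : ((G * C)ᴴ * D * (G * C)).PosSemidef := hD.conjTranspose_mul_mul_same (G * C)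
  have hT2 : ((G * C - t • R)ᴴ * (G * C - t • R)).PosSemidef :=
    posSemidef_conjTranspose_mul_self _
  have hT3 : (C - C * C).PosSemidef := by
    set Q : Matrix (Fin n) (Fin n) ℂ := CFC.sqrt C with hQdef
    have hQh : Qᴴ = Q := (CFC.sqrt_nonneg C).posSemidef.1
    have hQQ : Q * Q = C := CFC.sqrt_mul_sqrt_self C hC.nonneg
    have h := hOneC.mul_mul_conjTranspose_same Q
    rw [hQh] at h
    have e : Q * (1 - C) * Q = C - C * C := by
      rw [← hQQ]; noncomm_ring
    rwa [e] at h
  have hSum : ((G * C)ᴴ * D * (G * C) + (M * m) • ((G * C - t • R)ᴴ * (G * C - t • R))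
      + (M + m) • (C - C * C)).PosSemidef :=
    (hT1.add (psd_smul (by positivity) hT2)).add (psd_smul (by positivity) hT3)
  have hConj := hSum.mul_mul_conjTranspose_same R
  rw [hRh] at hConj
  have main : R * ((G * C)ᴴ * D * (G * C) + (M * m) • ((G * C - t • R)ᴴ * (G * C - t • R))
      + (M + m) • (C - C * C)) * R
      = (((M + m) ^ 2 / (4 * M * m)) • B ^ 2) - A ^ 2 := by
    have hGCh : (G * C)ᴴ = C * G := by rw [conjTranspose_mul, hGh, hCh]
    have hsubh : (G * C - t • R)ᴴ = C * G - t • R := by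
      rw [conjTranspose_sub, conjTranspose_mul, conjTranspose_smul, star_trivial, hGh, hCh, hRh]
    rw [hGCh, hsubh, hDdef, hPdef, hCdef, pow_two B, pow_two A, ← hRR]
    simp only [Matrix.mul_sub, Matrix.sub_mul, Matrix.mul_add, Matrix.add_mul,
      smul_mul_assoc, mul_smul_comm, smul_sub, smul_add, smul_smul,
      Matrix.mul_one, Matrix.one_mul, Matrix.mul_assoc, cancel1, cancel2, hGR, hRG]
    match_scalars
    all_goals (try simp only [htdef])
    all_goals field_simp
    all_goals try ring
  rwa [main] at hConj
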